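/- Let R be a head-finite ring and let ε ∈ R. Then there exists β ∈ R such that 1 + ε + ε²·β is a unit of R. -/

import Mathlib

/-- The head `R/J(R)` of a ring `R`: the quotient of `R` by its Jacobson radical
(the intersection of all maximal left ideals, which is a two-sided ideal). -/
abbrev RingHead (R : Type*) [Ring R] : Type _ :=
  (TwoSidedIdeal.jacobson (⊥ : TwoSidedIdeal R)).ringCon.Quotient

/-- A ring `R` is *head-finite* if its head `R/J(R)` is a semisimple ring and, for every
simple `R/J(R)`-module `M`, the division ring `End_{R/J(R)}(M)` is finite-dimensional over
its center.  (By Artin–Wedderburn, this says exactly that in the Wedderburn decomposition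
`R/J(R) ≅ ∏ Mat_{k i}(D i)`, each skew field `D i` is finite-dimensional over its center.) -/
def IsHeadFinite (R : Type u) [Ring R] : Prop :=
  IsSemisimpleRing (RingHead R) ∧
    ∀ (M : Type u) (_ : AddCommGroup M) (_ : Module (RingHead R) M),
      IsSimpleModule (RingHead R) M →
        Module.Finite (Subring.center (Module.End (RingHead R) M))
          (Module.End (RingHead R) M)

open LinearMap

theorem exists_unit_aux {S : Type*} [Ring S] [IsSemisimpleRing S] (e : S) :
    ∃ x : S, IsUnit (1 + e + e ^ 2 * x) := by
  classical
  set f : Module.End S S := LinearMap.toSpanSingleton S S e with hfdef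
  have hfapp : ∀ x : S, f x = x * e := fun x => by
    simp [hfdef, LinearMap.toSpanSingleton_apply, smul_eq_mul]
  obtain ⟨n₀, hn₀⟩ := Filter.eventually_atTop.mp f.eventually_isCompl_ker_pow_range_pow
  obtain ⟨n₁, hn₁⟩ := IsArtinian.monotone_stabilizes f.iterateRange
  set m : ℕ := max n₀ n₁ with hmdef
  set n : ℕ := m + 1 with hndef
  have hc : IsCompl (ker (f ^ n)) (range (f ^ n)) :=
    hn₀ n (le_trans (le_max_left _ _) (Nat.le_succ m))
  have hr : range (f ^ (n + 1)) = range (f ^ n) := by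
    have h1 : f.iterateRange n₁ = f.iterateRange n :=
      hn₁ n (le_trans (le_max_right _ _) (Nat.le_succ m))
    have h2 : f.iterateRange n₁ = f.iterateRange (n + 1) :=
      hn₁ (n + 1) (le_trans (le_max_right _ _) (le_trans (Nat.le_succ m) (Nat.le_succ n)))
    exact (h1.symm.trans h2 : (range (f ^ n) : Submodule S S) = range (f ^ (n+1))).symm
  set K : Submodule S S := ker (f ^ n) with hKdef
  set W : Submodule S S := range (f ^ n) with hWdef
  -- f maps K into K and W into W
  have hfK : ∀ x ∈ K, f x ∈ K := by
    intro x hx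
    have hx' : (f ^ n) x = 0 := hx
    have hpow : f ^ n * f = f * f ^ n := by rw [← pow_succ, ← pow_succ']
    have h := DFunLike.congr_fun hpow x
    show (f ^ n) (f x) = 0
    calc (f ^ n) (f x) = f ((f ^ n) x) := h
    _ = 0 := by rw [hx', map_zero]
  have hfW : ∀ x ∈ W, f x ∈ W := by
    rintro x ⟨y, rfl⟩
    have : f ((f ^ n) y) = (f ^ (n + 1)) y :=
      (DFunLike.congr_fun (pow_succ' f n) y).symm
    rw [this]
    exact hr ▸ LinearMap.mem_range_self _ y
  set f' : W →ₗ[S] W := f.restrict hfW with hf'def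
  have hf'inj : Function.Injective f' := by
    rw [← LinearMap.ker_eq_bot]
    rw [Submodule.eq_bot_iff]
    rintro ⟨w, hw⟩ hker
    have hfw : f w = 0 := congrArg Subtype.val hker
    have hK : w ∈ K := by
      show (f ^ (m + 1)) w = 0
      calc (f ^ (m + 1)) w = (f ^ m) (f w) := DFunLike.congr_fun (pow_succ f m) w
      _ = 0 := by rw [hfw, map_zero]
    have := hc.disjoint.le_bot ⟨hK, hw⟩
    exact Subtype.ext this
  have hf'surj : Function.Surjective f' := by
    rintro ⟨w, hw⟩
    obtain ⟨y, hy⟩ : w ∈ range (f ^ (n + 1)) := hr ▸ hw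
    refine ⟨⟨(f ^ n) y, LinearMap.mem_range_self _ y⟩, Subtype.ext ?_⟩
    show f ((f ^ n) y) = w
    rw [show f ((f ^ n) y) = (f ^ (n + 1)) y from (DFunLike.congr_fun (pow_succ' f n) y).symm, hy]
  set E : W ≃ₗ[S] W := LinearEquiv.ofBijective f' ⟨hf'inj, hf'surj⟩ with hEdef
  set πW : S →ₗ[S] W := Submodule.linearProjOfIsCompl W K hc.symm with hπWdef
  set πK : S →ₗ[S] K := Submodule.linearProjOfIsCompl K W hc with hπKdef
  set g : Module.End S S := -(W.subtype ∘ₗ (E.symm.toLinearMap ∘ₗ πW)) with hgdef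
  set β : S := g 1 with hβdef
  have hg : ∀ x : S, x * β = g x := by
    intro x
    have : g x = x • g 1 := by rw [← map_smul, smul_eq_mul, mul_one]
    rw [this, smul_eq_mul, hβdef]
  refine ⟨β, ?_⟩
  set u : S := 1 + e + e ^ 2 * β with hudef
  set N : Module.End S S := f ∘ₗ (K.subtype ∘ₗ πK) with hNdef
  -- key multiplicativity identity
  have keyW : ∀ w ∈ W, w * u = w ∧ N w = 0 := by
    intro w hw
    have hfw : f w ∈ W := hfW w hw
    have hffw : f (f w) ∈ W := hfW _ hfw
    have hπ1 : πW (f (f w)) = ⟨f (f w), hffw⟩ :=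
      Submodule.linearProjOfIsCompl_apply_left hc.symm ⟨f (f w), hffw⟩
    have hE : E ⟨f w, hfw⟩ = ⟨f (f w), hffw⟩ := by
      apply Subtype.ext
      rfl
    have hEs : E.symm ⟨f (f w), hffw⟩ = ⟨f w, hfw⟩ := by
      rw [← hE, LinearEquiv.symm_apply_apply]
    have hgval : g (f (f w)) = -(f w) := by
      rw [hgdef]
      simp only [LinearMap.neg_apply, LinearMap.coe_comp, Function.comp_apply]
      rw [hπ1]
      show -(((E.symm ⟨f (f w), hffw⟩ : W) : S)) = -(f w)
      rw [hEs]
    constructor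
    · have expand : w * u = w + f w + g (f (f w)) := by
        rw [hudef]
        rw [mul_add, mul_add, mul_one, ← hfapp]
        congr 1
        rw [← mul_assoc, hg]
        congr 1
        rw [pow_two, ← mul_assoc, ← hfapp, ← hfapp]
      rw [expand, hgval]
      abel
    · rw [hNdef]
      simp only [LinearMap.coe_comp, Function.comp_apply]
      rw [hπKdef, show K.linearProjOfIsCompl W hc w = 0 from
        Submodule.projectionOnto_apply_of_mem_right hc hw]
      simp
  have keyK : ∀ k ∈ K, k * u = k + N k := by
    intro k hk
    have hfk : f k ∈ K := hfK k hk
    have hffk : f (f k) ∈ K := hfK _ hfk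
    have hπ0 : πW (f (f k)) = 0 :=
      Submodule.projectionOnto_apply_of_mem_right hc.symm hffk
    have hgval : g (f (f k)) = 0 := by
      rw [hgdef]
      simp only [LinearMap.neg_apply, LinearMap.coe_comp, Function.comp_apply]
      rw [hπ0]
      simp
    have expand : k * u = k + f k + g (f (f k)) := by
      rw [hudef, mul_add, mul_add, mul_one, ← hfapp]
      congr 1
      rw [← mul_assoc, hg]
      congr 1
      rw [pow_two, ← mul_assoc, ← hfapp, ← hfapp]
    have hNk : N k = f k := by
      rw [hNdef]
      simp only [LinearMap.coe_comp, Function.comp_apply]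
      rw [hπKdef]
      rw [show πK k = ⟨k, hk⟩ from Submodule.linearProjOfIsCompl_apply_left hc ⟨k, hk⟩]
      rfl
    rw [expand, hgval, hNk]
    abel
  have key : ∀ x : S, x * u = x + N x := by
    intro x
    have hdec : ((πK x : S)) + ((πW x : S)) = x :=
      Submodule.projection_add_projection_eq_self hc x
    have h1 := keyK (πK x) (πK x).2
    have h2 := (keyW (πW x) (πW x).2).1
    have h3 := (keyW (πW x) (πW x).2).2
    calc x * u = ((πK x : S) + (πW x : S)) * u := by rw [hdec]
    _ = (πK x : S) * u + (πW x : S) * u := add_mul _ _ _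
    _ = ((πK x : S) + N (πK x)) + (πW x : S) := by rw [h1, h2]
    _ = ((πK x : S) + (πW x : S)) + (N (πK x) + N (πW x)) := by rw [h3]; abel
    _ = x + N x := by rw [← map_add, hdec]
  -- nilpotency of N
  have hNpow : ∀ j : ℕ, ∀ x : S, (N ^ (j + 1)) x = (f ^ (j + 1)) ((πK x : S)) := by
    intro j
    induction j with
    | zero =>
      intro x
      simp only [pow_one, hNdef]
      rfl
    | succ j ih =>
      intro x
      have h1 : (N ^ (j + 2)) x = (N ^ (j + 1)) (N x) :=
        DFunLike.congr_fun (pow_succ N (j + 1)) x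
      rw [h1, ih]
      have hNx : N x ∈ K := hfK _ (πK x).2
      have hπNx : ((πK (N x) : S)) = N x := by
        rw [show πK (N x) = ⟨N x, hNx⟩ from
          Submodule.linearProjOfIsCompl_apply_left hc ⟨N x, hNx⟩]
      rw [hπNx]
      have hNx' : N x = f ((πK x : S)) := rfl
      rw [hNx', ← Module.End.mul_apply, ← pow_succ]
  have hNnil : IsNilpotent N := by
    refine ⟨n, LinearMap.ext fun x => ?_⟩
    show (N ^ (m + 1)) x = 0
    rw [hNpow m x]
    exact (πK x).2
  have hunit : IsUnit ((1 : Module.End S S) + N) := IsNilpotent.isUnit_one_add hNnil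
  obtain ⟨ν, hν⟩ := hunit
  have hνapp : ∀ x : S, (ν : Module.End S S) x = x * u := by
    intro x
    rw [hν, key x, LinearMap.add_apply, Module.End.one_apply]
  have hvu : ((↑ν⁻¹ : Module.End S S) 1) * u = 1 := by
    rw [← hνapp ((↑ν⁻¹ : Module.End S S) 1), ← Module.End.mul_apply, Units.mul_inv,
      Module.End.one_apply]
  have hinj : Function.Injective (ν : Module.End S S) := fun a b hab => by
    have h2 := congrArg (↑ν⁻¹ : Module.End S S) hab
    rwa [← Module.End.mul_apply, ← Module.End.mul_apply, Units.inv_mul,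
      Module.End.one_apply, Module.End.one_apply] at h2
  have huv : u * ((↑ν⁻¹ : Module.End S S) 1) = 1 := by
    apply hinj
    rw [hνapp, hνapp, mul_assoc, hvu, mul_one, one_mul]
  exact ⟨⟨u, (↑ν⁻¹ : Module.End S S) 1, huv, hvu⟩, rfl⟩

/-- `1 + j` is a unit whenever `j` is in the Jacobson radical. -/
theorem jac_one_add_isUnit {R : Type*} [Ring R] {j : R}
    (hj : j ∈ TwoSidedIdeal.jacobson (⊥ : TwoSidedIdeal R)) : IsUnit (1 + j) := by
  have left : ∀ x ∈ TwoSidedIdeal.jacobson (⊥ : TwoSidedIdeal R),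
      ∃ z : R, z * (1 + x) = 1 ∧ z - 1 ∈ TwoSidedIdeal.jacobson (⊥ : TwoSidedIdeal R) := by
    intro x hx
    rw [TwoSidedIdeal.mem_jacobson_iff] at hx
    obtain ⟨z, hz⟩ := hx 1
    rw [TwoSidedIdeal.mem_bot] at hz
    have hz1 : z * (1 + x) = 1 := by
      have : z * 1 * x + z - 1 = 0 := hz
      have h2 : z * x + z = 1 := by
        rw [mul_one] at this
        linear_combination (norm := noncomm_ring) this
      calc z * (1 + x) = z * x + z := by noncomm_ring
      _ = 1 := h2
    refine ⟨z, hz1, ?_⟩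
    have : z - 1 = -(z * x) := by
      have h2 : z * x + z = 1 := by
        rw [mul_one] at hz
        linear_combination (norm := noncomm_ring) hz
      linear_combination (norm := noncomm_ring) h2
    rw [this]
    exact TwoSidedIdeal.neg_mem _ (TwoSidedIdeal.mul_mem_left _ _ _
      (by rwa [TwoSidedIdeal.mem_jacobson_iff]))
  obtain ⟨z, hz1, hz2⟩ := left j hj
  obtain ⟨w, hw1, _⟩ := left (z - 1) hz2
  have hwz : w * z = 1 := by
    have : 1 + (z - 1) = z := by abel
    rwa [this] at hw1
  -- w = 1 + j via left/right inverse of z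
  have hw : w = 1 + j := by
    calc w = w * (z * (1 + j)) := by rw [hz1, mul_one]
    _ = (w * z) * (1 + j) := by rw [mul_assoc]
    _ = 1 + j := by rw [hwz, one_mul]
  refine ⟨⟨1 + j, z, ?_, hz1⟩, rfl⟩
  rw [← hw, hwz]

/-- A unit in the head lifts to a unit in `R`. -/
theorem lift_isUnit {R : Type*} [Ring R] {x : R}
    (h : IsUnit ((TwoSidedIdeal.jacobson (⊥ : TwoSidedIdeal R)).ringCon.mk' x)) :
    IsUnit x := by
  set J := TwoSidedIdeal.jacobson (⊥ : TwoSidedIdeal R) with hJ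
  obtain ⟨u, hu⟩ := h
  obtain ⟨v, hv⟩ : ∃ v : R, J.ringCon.mk' v = ((↑u⁻¹ : J.ringCon.Quotient)) :=
    Quot.exists_rep _
  have h1 : J.ringCon.mk' (v * x) = J.ringCon.mk' 1 := by
    rw [map_mul, map_one, hv, ← hu, Units.inv_mul]
  have h2 : J.ringCon.mk' (x * v) = J.ringCon.mk' 1 := by
    rw [map_mul, map_one, hv, ← hu, Units.mul_inv]
  have m1 : v * x - 1 ∈ J := (TwoSidedIdeal.rel_iff _ _ _).mp (J.ringCon.eq.mp h1)
  have m2 : x * v - 1 ∈ J := (TwoSidedIdeal.rel_iff _ _ _).mp (J.ringCon.eq.mp h2)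
  have u1 : IsUnit (v * x) := by
    have := jac_one_add_isUnit m1
    rwa [add_sub_cancel] at this
  have u2 : IsUnit (x * v) := by
    have := jac_one_add_isUnit m2
    rwa [add_sub_cancel] at this
  obtain ⟨a, ha⟩ := u1.exists_left_inv
  obtain ⟨b, hb⟩ := u2.exists_right_inv
  have hleft : (a * v) * x = 1 := by rw [mul_assoc, ha]
  have hright : x * (v * b) = 1 := by rw [← mul_assoc, hb]
  have : a * v = v * b := by
    calc a * v = (a * v) * (x * (v * b)) := by rw [hright, mul_one]
    _ = ((a * v) * x) * (v * b) := by noncomm_ring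
    _ = v * b := by rw [hleft, one_mul]
  exact ⟨⟨x, v * b, hright, by rw [← this, hleft]⟩, rfl⟩

/-- Let `R` be a head-finite ring and `ε ∈ R`.  Then there exists `β ∈ R` such that
`1 + ε + ε²·β` is a unit of `R`. -/
theorem exists_unit_one_add_add_sq_mul (R : Type u) [Ring R] (hR : IsHeadFinite R)
    (ε : R) : ∃ β : R, IsUnit (1 + ε + ε ^ 2 * β) := by
  haveI : IsSemisimpleRing (RingHead R) := hR.1
  set mk := (TwoSidedIdeal.jacobson (⊥ : TwoSidedIdeal R)).ringCon.mk' with hmk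
  obtain ⟨x, hx⟩ := exists_unit_aux (mk ε)
  obtain ⟨β, hβ⟩ : ∃ β : R, mk β = x := Quot.exists_rep x
  refine ⟨β, lift_isUnit ?_⟩
  have h : mk (1 + ε + ε ^ 2 * β) = 1 + mk ε + (mk ε) ^ 2 * mk β := by
    rw [map_add, map_add, map_one, map_mul, map_pow]
  rw [h, hβ]
  exact hx
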